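/- Let φ ∈ L^∞(𝕋) with Fourier coefficients φ̂(k), k ∈ ℤ, and let T_φ be the Toeplitz operator on H²(𝔻) given by T_φ f = P(φf) where P is the orthogonal projection of L²(𝕋) onto H²(𝔻). Fix n ≥ 1 and let C_n be the conjugation on H²(𝔻) defined by C_n(Σ_{k≥0} Σ_{m=0}^{n−1} a_{nk+m} z^{nk+m}) = Σ_{k≥0} Σ_{m=0}^{n−1} conj(a_{nk+(n−m−1)}) z^{nk+m}. Then C_n T_φ C_n = T_φ* if and only if φ̂(nl) = φ̂(−nl) for all l ∈ ℤ and φ̂(r+nl) = 0 for all l ∈ ℤ and all 1 ≤ r ≤ n−1. -/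

import Mathlib

open scoped ComplexConjugate

/-- The Hardy space `H²(𝔻)`, identified with `ℓ²(ℕ, ℂ)` via `z^n ↦ e n`. -/
noncomputable abbrev HardySpace := lp (fun _ : ℕ => ℂ) 2

/-- The standard basis vector `e j`, corresponding to `z^j`. -/
noncomputable def e (j : ℕ) : HardySpace := lp.single 2 j 1

/-- parity + summability forces vanishing -/
lemma parity_vanish (h : ℤ → ℂ)
    (hsum0 : Summable fun t : ℤ => ‖h (2*t)‖^2)
    (hsum1 : Summable fun t : ℤ => ‖h (2*t+1)‖^2)
    (heven : ∀ t, h t = h (-t))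
    (hshift : ∀ t, h t = h (-t-2)) : ∀ t, h t = 0 := by
  have hper : ∀ t, h (t+2) = h t := by
    intro t
    have e1 : -(t+2) = -t-2 := by ring
    rw [heven (t+2), e1, ← hshift t]
  have key : ∀ t : ℤ, h (2*t) = h 0 ∧ h (2*t+1) = h 1 := by
    intro t
    induction t using Int.induction_on with
    | zero => norm_num
    | succ i ih =>
      constructor
      · have e1 : (2*((i:ℤ)+1)) = 2*i+2 := by ring
        rw [e1, hper]; exact ih.1
      · have e1 : (2*((i:ℤ)+1)+1) = (2*i+1)+2 := by ring
        rw [e1, hper]; exact ih.2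
    | pred i ih =>
      constructor
      · have e1 : 2*(-(i:ℤ)) = (2*(-(i:ℤ)-1)) + 2 := by ring
        rw [e1, hper] at ih
        exact ih.1
      · have e1 : 2*(-(i:ℤ))+1 = (2*(-(i:ℤ)-1)+1) + 2 := by ring
        rw [e1, hper] at ih
        exact ih.2
  have h0 : h 0 = 0 := by
    have : (fun t : ℤ => ‖h (2*t)‖^2) = fun _ : ℤ => ‖h 0‖^2 :=
      funext fun t => by rw [(key t).1]
    rw [this] at hsum0
    have := (summable_const_iff _).mp hsum0
    have := pow_eq_zero_iff (n := 2) (by norm_num) |>.mp this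
    simpa using this
  have h1 : h 1 = 0 := by
    have : (fun t : ℤ => ‖h (2*t+1)‖^2) = fun _ : ℤ => ‖h 1‖^2 :=
      funext fun t => by rw [(key t).2]
    rw [this] at hsum1
    have := (summable_const_iff _).mp hsum1
    have := pow_eq_zero_iff (n := 2) (by norm_num) |>.mp this
    simpa using this
  intro t
  rcases Int.even_or_odd t with ⟨m, hm⟩ | ⟨m, hm⟩
  · have : t = 2*m := by omega
    rw [this, (key m).1, h0]
  · have : t = 2*m+1 := by omega
    rw [this, (key m).2, h1]

lemma cast_block (n q s k m : ℕ) (hn : 1 ≤ n) (hs : s < n) (hm : m < n) :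
    (↑(n*q+(n-1-s)) : ℤ) - ↑(n*k+(n-1-m)) = ↑n*((q:ℤ)-k) + ((m:ℤ)-s) := by
  have e1 : (↑(n-1-s) : ℤ) = ↑n-1-↑s := by omega
  have e2 : (↑(n-1-m) : ℤ) = ↑n-1-↑m := by omega
  push_cast [e1, e2]
  ring

/-- From the symmetry condition derive the Fourier coefficient conditions. -/
lemma S_to_rhs (n : ℕ) (hn : 1 ≤ n) (φhat : ℤ → ℂ)
    (hsq : Summable fun k => ‖φhat k‖ ^ 2)
    (S : ∀ l d : ℤ, d.natAbs ≤ n - 1 → φhat ((n:ℤ)*l + d) = φhat (-((n:ℤ)*l) + d)) :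
    ((∀ l : ℤ, φhat ((n : ℤ) * l) = φhat (-((n : ℤ) * l))) ∧
        ∀ (l : ℤ) (r : ℕ), 1 ≤ r → r ≤ n - 1 → φhat ((r : ℤ) + n * l) = 0) := by
  constructor
  · intro l
    have := S l 0 (by simp)
    simpa using this
  · intro l r hr1 hr2
    set h : ℤ → ℂ := fun t => φhat ((r:ℤ) + n*t) with hh
    show h l = 0
    have heven : ∀ t, h t = h (-t) := by
      intro t
      show φhat _ = φhat _
      have e1 : (r:ℤ) + n*t = (n:ℤ)*t + r := by ring
      rw [e1, S t r (by omega)]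
      congr 1; ring
    have hshift : ∀ t, h t = h (-t-2) := by
      intro t
      show φhat _ = φhat _
      have e1 : (r:ℤ) + n*t = (n:ℤ)*(t+1) + ((r:ℤ) - n) := by ring
      rw [e1, S (t+1) ((r:ℤ) - n) (by omega)]
      congr 1; ring
    have hinj0 : Function.Injective (fun t : ℤ => (r:ℤ) + n*(2*t)) := by
      intro a b hab
      simp only at hab
      have hne : (n:ℤ) ≠ 0 := by omega
      have := mul_left_cancel₀ hne (by linarith : (n:ℤ)*(2*a) = (n:ℤ)*(2*b))
      omega
    have hinj1 : Function.Injective (fun t : ℤ => (r:ℤ) + n*(2*t+1)) := by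
      intro a b hab
      simp only at hab
      have hne : (n:ℤ) ≠ 0 := by omega
      have := mul_left_cancel₀ hne (by linarith : (n:ℤ)*(2*a+1) = (n:ℤ)*(2*b+1))
      omega
    have hs0 : Summable fun t : ℤ => ‖h (2*t)‖^2 := hsq.comp_injective hinj0
    have hs1 : Summable fun t : ℤ => ‖h (2*t+1)‖^2 := hsq.comp_injective hinj1
    exact parity_vanish h hs0 hs1 heven hshift l

/-- Converse: Fourier conditions imply the symmetry condition. -/
lemma rhs_to_S (n : ℕ) (hn : 1 ≤ n) (φhat : ℤ → ℂ)
    (h1 : ∀ l : ℤ, φhat ((n : ℤ) * l) = φhat (-((n : ℤ) * l)))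
    (h2 : ∀ (l : ℤ) (r : ℕ), 1 ≤ r → r ≤ n - 1 → φhat ((r : ℤ) + n * l) = 0) :
    ∀ l d : ℤ, d.natAbs ≤ n - 1 → φhat ((n:ℤ)*l + d) = φhat (-((n:ℤ)*l) + d) := by
  intro l d hd
  rcases lt_trichotomy d 0 with hdlt | rfl | hdgt
  · set r : ℕ := n - d.natAbs with hr
    have hcast : (r:ℤ) = (n:ℤ) + d := by omega
    have hr1 : 1 ≤ r := by omega
    have hr2 : r ≤ n - 1 := by omega
    have e1 : (n:ℤ)*l + d = (r:ℤ) + n*(l-1) := by rw [hcast]; ring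
    have e2 : -((n:ℤ)*l) + d = (r:ℤ) + n*(-l-1) := by rw [hcast]; ring
    rw [e1, e2, h2 (l-1) r hr1 hr2, h2 (-l-1) r hr1 hr2]
  · simpa using h1 l
  · set r : ℕ := d.natAbs with hr
    have hcast : (r:ℤ) = d := by omega
    have hr1 : 1 ≤ r := by omega
    have hr2 : r ≤ n - 1 := by omega
    have e1 : (n:ℤ)*l + d = (r:ℤ) + n*l := by rw [hcast]; ring
    have e2 : -((n:ℤ)*l) + d = (r:ℤ) + n*(-l) := by rw [hcast]; ring
    rw [e1, e2, h2 l r hr1 hr2, h2 (-l) r hr1 hr2]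

lemma e_apply (j i : ℕ) : (e j : HardySpace) i = if i = j then 1 else 0 := by
  rcases eq_or_ne i j with rfl | h
  · simp [e, lp.single_apply_self]
  · simp [e, lp.single_apply_ne (E := fun _ : ℕ => ℂ) 2 j (1:ℂ) h, h]

lemma e_inner (i : ℕ) (f : HardySpace) : @inner ℂ _ _ (e i) f = f i := by
  rw [e, lp.inner_single_left]
  simp [RCLike.inner_apply]

lemma hTsum (φhat : ℤ → ℂ) (T : HardySpace →L[ℂ] HardySpace)
    (hT : ∀ j m : ℕ, (T (e j)) m = φhat ((m : ℤ) - (j : ℤ)))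
    (y : HardySpace) (i : ℕ) :
    HasSum (fun j => y j * φhat ((i:ℤ) - (j:ℤ))) ((T y) i) := by
  have hy := lp.hasSum_single (E := fun _ : ℕ => ℂ) (p := 2) ENNReal.ofNat_ne_top y
  set L : HardySpace →L[ℂ] ℂ := (innerSL ℂ (e i)).comp T with hL
  have hmap := hy.mapL L
  have hLy : L y = (T y) i := by
    simp only [hL, ContinuousLinearMap.comp_apply, innerSL_apply_apply]
    exact e_inner i (T y)
  have hterm : ∀ j, L (lp.single 2 j (y j)) = y j * φhat ((i:ℤ) - (j:ℤ)) := by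
    intro j
    have hsingle : lp.single (E := fun _ : ℕ => ℂ) 2 j (y j) = y j • e j := by
      rw [e, ← lp.single_smul]
      norm_num
    rw [hsingle, map_smul]
    simp only [hL, ContinuousLinearMap.comp_apply, innerSL_apply_apply, smul_eq_mul]
    rw [e_inner i (T (e j)), hT j i]
  rw [hLy] at hmap
  exact hmap.congr_fun fun j => (hterm j).symm

/-- The block reversal map on indices. -/
def sigmaFun (n j : ℕ) : ℕ := n*(j/n) + (n-1 - j%n)

lemma sigma_block (n : ℕ) (hn : 1 ≤ n) (k m : ℕ) (hm : m < n) :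
    sigmaFun n (n*k+m) = n*k+(n-1-m) := by
  unfold sigmaFun
  rw [Nat.mul_add_div hn, Nat.div_eq_of_lt hm, Nat.mul_add_mod, Nat.mod_eq_of_lt hm]
  simp

lemma sigma_inv (n : ℕ) (hn : 1 ≤ n) : Function.Involutive (sigmaFun n) := by
  intro j
  have hm : j % n < n := Nat.mod_lt _ hn
  have hj : n*(j/n) + j%n = j := Nat.div_add_mod j n
  show sigmaFun n (sigmaFun n j) = j
  have h1 : sigmaFun n j = n*(j/n) + (n-1-j%n) := rfl
  rw [h1, sigma_block n hn (j/n) (n-1-j%n) (by omega)]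
  have : n-1-(n-1-j%n) = j%n := by omega
  rw [this, hj]

/-- Characterization of `C_n`-symmetric Toeplitz operators: for `φ ∈ L^∞(𝕋)` with Fourier
coefficients `φhat` (hence square-summable), the Toeplitz operator `T_φ`
(given on the basis by `(T_φ e_j)_m = φhat (m - j)`) satisfies `C_n T_φ C_n = T_φ*`
for the block-reversal conjugation `C_n` if and only if `φhat (nl) = φhat (-nl)` for all
`l ∈ ℤ` and `φhat (r + nl) = 0` for all `l ∈ ℤ` and `1 ≤ r ≤ n-1`. -/
theorem toeplitz_Cn_symmetric_iff (n : ℕ) (hn : 1 ≤ n) (φhat : ℤ → ℂ)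
    (hsq : Summable fun k => ‖φhat k‖ ^ 2)
    (T : HardySpace →L[ℂ] HardySpace)
    (hT : ∀ j m : ℕ, (T (e j)) m = φhat ((m : ℤ) - (j : ℤ)))
    (C : HardySpace → HardySpace)
    (hC : ∀ (a : HardySpace) (k m : ℕ), m < n →
      (C a) (n * k + m) = conj (a (n * k + (n - 1 - m)))) :
    (∀ x, C (T (C x)) = ContinuousLinearMap.adjoint T x) ↔
      ((∀ l : ℤ, φhat ((n : ℤ) * l) = φhat (-((n : ℤ) * l))) ∧
        ∀ (l : ℤ) (r : ℕ), 1 ≤ r → r ≤ n - 1 → φhat ((r : ℤ) + n * l) = 0) := by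
  have hmodlt : ∀ j : ℕ, j % n < n := fun j => Nat.mod_lt _ hn
  have hCcoord : ∀ (a : HardySpace) (j : ℕ), (C a) j = conj (a (sigmaFun n j)) := by
    intro a j
    have h1 := hC a (j/n) (j%n) (hmodlt j)
    rwa [Nat.div_add_mod] at h1
  have hadj : ∀ (f : HardySpace) (p : ℕ),
      (ContinuousLinearMap.adjoint T f) p = @inner ℂ _ _ (T (e p)) f := by
    intro f p
    rw [← e_inner p (ContinuousLinearMap.adjoint T f),
      ContinuousLinearMap.adjoint_inner_right]
  constructor
  · -- forward
    intro H
    have hCe : ∀ k m, m < n → C (e (n*k+m)) = e (n*k+(n-1-m)) := by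
      intro k m hm
      refine lp.ext (funext fun p => ?_)
      rw [hCcoord, e_apply, e_apply]
      by_cases hp : p = n*k+(n-1-m)
      · subst hp
        rw [sigma_block n hn k (n-1-m) (by omega)]
        have h2 : n-1-(n-1-m) = m := by omega
        simp [h2]
      · have hne : sigmaFun n p ≠ n*k+m := by
          intro hcontra
          apply hp
          have := congrArg (sigmaFun n) hcontra
          rw [sigma_inv n hn p, sigma_block n hn k m hm] at this
          exact this
        simp [hne, hp]
    have M : ∀ (k q m s : ℕ), m < n → s < n →
        φhat ((↑(n*q+(n-1-s)) : ℤ) - ↑(n*k+(n-1-m))) = φhat ((↑(n*k+m) : ℤ) - ↑(n*q+s)) := by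
      intro k q m s hm hs
      have hx := H (e (n*k+m))
      rw [hCe k m hm] at hx
      have hx2 := congrFun (congrArg (fun v : HardySpace => (v : ∀ _ : ℕ, ℂ)) hx) (n*q+s)
      simp only at hx2
      rw [hCcoord, sigma_block n hn q s hs, hT] at hx2
      rw [hadj (e (n*k+m)) (n*q+s), ← inner_conj_symm,
        e_inner (n*k+m) (T (e (n*q+s))), hT (n*q+s) (n*k+m)] at hx2
      have := congrArg conj hx2
      simpa using this
    have S : ∀ l d : ℤ, d.natAbs ≤ n - 1 →
        φhat ((n:ℤ)*l + d) = φhat (-((n:ℤ)*l) + d) := by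
      intro l d hd
      have hm : d.toNat < n := by omega
      have hs : (-d).toNat < n := by omega
      have key := M ((-l).toNat) (l.toNat) (d.toNat) ((-d).toNat) hm hs
      have h1 : ((l.toNat : ℤ)) - ((-l).toNat : ℤ) = l := by omega
      have h2 : ((d.toNat : ℤ)) - ((-d).toNat : ℤ) = d := by omega
      have ecast1 : (↑(n*(l.toNat)+(n-1-(-d).toNat)) : ℤ) - ↑(n*((-l).toNat)+(n-1-d.toNat))
          = ↑n*l + d := by
        rw [cast_block n (l.toNat) ((-d).toNat) ((-l).toNat) (d.toNat) hn hs hm]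
        rw [h1, h2]
      have ecast2 : (↑(n*((-l).toNat)+d.toNat) : ℤ) - ↑(n*(l.toNat)+(-d).toNat)
          = -(↑n*l) + d := by
        push_cast
        linear_combination (-(n:ℤ))*h1 + h2
      rw [ecast1, ecast2] at key
      exact key
    exact S_to_rhs n hn φhat hsq S
  · -- backward
    rintro ⟨h1, h2⟩ x
    have S := rhs_to_S n hn φhat h1 h2
    refine lp.ext (funext fun p => ?_)
    show (C (T (C x))) p = (ContinuousLinearMap.adjoint T x) p
    have hL1 : (C (T (C x))) p = conj ((T (C x)) (sigmaFun n p)) := hCcoord _ p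
    have hsum1 := hTsum φhat T hT (C x) (sigmaFun n p)
    have hsum2 := hsum1.star
    have hfun2 : (fun j => star ((C x) j * φhat ((sigmaFun n p : ℤ) - (j:ℤ))))
        = fun j => x (sigmaFun n j) * conj (φhat ((sigmaFun n p : ℤ) - (j:ℤ))) := by
      funext j
      rw [hCcoord x j]
      simp [star_mul', RCLike.star_def]
    rw [hfun2] at hsum2
    have hsum3 := (Equiv.hasSum_iff ((sigma_inv n hn).toPerm _)).mpr hsum2
    have hfun3 : ((fun j => x (sigmaFun n j) * conj (φhat ((sigmaFun n p : ℤ) - (j:ℤ))))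
          ∘ ((sigma_inv n hn).toPerm _))
        = fun j => x j * conj (φhat ((sigmaFun n p : ℤ) - (sigmaFun n j : ℤ))) := by
      funext j
      simp only [Function.comp_apply, Function.Involutive.coe_toPerm]
      rw [sigma_inv n hn j]
    rw [hfun3] at hsum3
    have hadj0 := lp.hasSum_inner (𝕜 := ℂ) (T (e p)) x
    have hfun4 : (fun j => (inner ℂ ((T (e p)) j) (x j) : ℂ))
        = fun j => x j * conj (φhat ((j:ℤ) - (p:ℤ))) := by
      funext j
      rw [RCLike.inner_apply, hT p j, mul_comm]
    rw [hfun4] at hadj0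
    have hterms : (fun j : ℕ => x j * conj (φhat ((sigmaFun n p : ℤ) - (sigmaFun n j : ℤ))))
        = fun j => x j * conj (φhat ((j:ℤ) - (p:ℤ))) := by
      funext j
      have e1 : ((sigmaFun n p : ℤ)) - (sigmaFun n j : ℤ)
          = ↑n*(((p/n : ℕ):ℤ) - ((j/n : ℕ):ℤ)) + (((j%n : ℕ):ℤ) - ((p%n : ℕ):ℤ)) := by
        show (↑(n*(p/n)+(n-1-p%n)) : ℤ) - ↑(n*(j/n)+(n-1-j%n)) = _
        exact cast_block n (p/n) (p%n) (j/n) (j%n) hn (hmodlt p) (hmodlt j)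
      have hjc : (j:ℤ) = n*((j/n : ℕ):ℤ) + ((j%n : ℕ):ℤ) := by
        exact_mod_cast (Nat.div_add_mod j n).symm
      have hpc : (p:ℤ) = n*((p/n : ℕ):ℤ) + ((p%n : ℕ):ℤ) := by
        exact_mod_cast (Nat.div_add_mod p n).symm
      have e2 : ((j:ℤ)) - (p:ℤ)
          = -(↑n*(((p/n : ℕ):ℤ) - ((j/n : ℕ):ℤ))) + (((j%n : ℕ):ℤ) - ((p%n : ℕ):ℤ)) := by
        rw [hjc, hpc]; ring
      have hbound : (((j%n : ℕ):ℤ) - ((p%n : ℕ):ℤ)).natAbs ≤ n - 1 := by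
        have := hmodlt j; have := hmodlt p; omega
      rw [e1, e2, S _ _ hbound]
    rw [hterms] at hsum3
    have hval := hsum3.unique hadj0
    rw [hL1, hadj x p, ← hval]
    rfl
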